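/- Continued fraction representation: for y ∈ {−1,1}^{ℤ₊} set z_i = (1−2p)(1−2ε)·y_{i−1}·tanh(w_i(y)), q_i = (1−2p)·y_{i−1}·y_i, and b_i = 4ε(1−ε)·q_i for i ≥ 1. Then |z_{i+1}| < 1 (so 1 + z_{i+1} ≠ 0) and z_i = q_i − b_i/(1 + z_{i+1}) for every i ≥ 1; moreover 2·g(y) = 1 + z_1. -/

import Mathlib

/-- continued fraction representation: for `y ∈ {−1,1}^{ℤ₊}` set
`z_i = (1−2p)(1−2ε)·y_{i−1}·tanh(w_i(y))`, `q_i = (1−2p)·y_{i−1}·y_i`, and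
`b_i = 4ε(1−ε)·q_i` for `i ≥ 1`. Then `|z_{i+1}| < 1` (so `1 + z_{i+1} ≠ 0`) and
`z_i = q_i − b_i/(1 + z_{i+1})` for every `i ≥ 1`; moreover `2·g(y) = 1 + z_1`.
Here `W n i = w_i^{(n)}(y)`, `wlim i = w_i(y)`, and
`g(y) = (1/λ)·cosh(w_0(y))·exp(B(w_1(y)))/cosh(w_1(y))`. -/
lemma my_abs_tanh_lt_one (x : ℝ) : |Real.tanh x| < 1 := by
  have hc := Real.cosh_pos x
  have hsq := Real.cosh_sq_sub_sinh_sq x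
  rw [Real.tanh_eq_sinh_div_cosh, abs_div, abs_of_pos hc, div_lt_one hc]
  nlinarith [sq_abs (Real.sinh x), abs_nonneg (Real.sinh x)]

lemma my_exp_half_log {r : ℝ} (hr : 0 < r) :
    Real.exp ((1/2) * Real.log r) ^ 2 = r := by
  rw [sq, ← Real.exp_add]
  have : (1/2) * Real.log r + (1/2) * Real.log r = Real.log r := by ring
  rw [this, Real.exp_log hr]

lemma my_tanh_half_log {r : ℝ} (hr : 0 < r) :
    Real.tanh ((1/2) * Real.log r) = (r - 1) / (r + 1) := by
  set s := Real.exp ((1/2) * Real.log r) with hs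
  have hs0 : 0 < s := Real.exp_pos _
  have hs2 : s ^ 2 = r := my_exp_half_log hr
  rw [Real.tanh_eq_sinh_div_cosh, Real.sinh_eq, Real.cosh_eq, Real.exp_neg, ← hs, ← hs2]
  have h1 : s + s⁻¹ > 0 := by positivity
  have h2 : s^2 + 1 > 0 := by positivity
  field_simp

lemma my_one_add_tanh_mul (x y : ℝ) :
    1 + Real.tanh x * Real.tanh y = Real.cosh (x + y) / (Real.cosh x * Real.cosh y) := by
  have hx := (Real.cosh_pos x).ne'
  have hy := (Real.cosh_pos y).ne'
  rw [Real.tanh_eq_sinh_div_cosh, Real.tanh_eq_sinh_div_cosh, Real.cosh_add]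
  field_simp

lemma my_tanh_add (x y : ℝ) :
    Real.tanh (x + y) = (Real.tanh x + Real.tanh y) / (1 + Real.tanh x * Real.tanh y) := by
  have hx := (Real.cosh_pos x).ne'
  have hy := (Real.cosh_pos y).ne'
  have hxy := (Real.cosh_pos (x + y)).ne'
  rw [my_one_add_tanh_mul, Real.tanh_eq_sinh_div_cosh, Real.tanh_eq_sinh_div_cosh,
    Real.tanh_eq_sinh_div_cosh, Real.sinh_add, Real.cosh_add]
  field_simp

lemma my_tanh_A (J u : ℝ) :
    Real.tanh ((1/2) * Real.log (Real.cosh (u + J) / Real.cosh (u - J)))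
      = Real.tanh u * Real.tanh J := by
  have ha := Real.cosh_pos (u + J)
  have hb := Real.cosh_pos (u - J)
  have hcu := (Real.cosh_pos u).ne'
  have hcJ := (Real.cosh_pos J).ne'
  rw [my_tanh_half_log (div_pos ha hb)]
  rw [Real.tanh_eq_sinh_div_cosh, Real.tanh_eq_sinh_div_cosh]
  rw [Real.cosh_add, Real.cosh_sub] at *
  field_simp
  ring

lemma my_coshA_expB (J w : ℝ) :
    Real.cosh ((1/2) * Real.log (Real.cosh (w + J) / Real.cosh (w - J)))
      * Real.exp ((1/2) * Real.log (4 * Real.cosh (w + J) * Real.cosh (w - J)))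
      = 2 * Real.cosh J * Real.cosh w := by
  have ha := Real.cosh_pos (w + J)
  have hb := Real.cosh_pos (w - J)
  set a := Real.cosh (w + J)
  set b := Real.cosh (w - J)
  set s := Real.exp ((1/2) * Real.log (a / b)) with hsdef
  set u := Real.exp ((1/2) * Real.log (4 * a * b)) with hudef
  have hs0 : 0 < s := Real.exp_pos _
  have hu0 : 0 < u := Real.exp_pos _
  have hs2 : s ^ 2 = a / b := my_exp_half_log (div_pos ha hb)
  have hu2 : u ^ 2 = 4 * a * b := my_exp_half_log (by positivity)
  have hab : a + b = 2 * Real.cosh J * Real.cosh w := by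
    simp only [a, b, Real.cosh_add, Real.cosh_sub]; ring
  have husb : u = 2 * s * b := by
    have h1 : u ^ 2 = (2 * s * b) ^ 2 := by
      rw [hu2]
      have : s ^ 2 * b = a := by rw [hs2]; field_simp
      nlinarith [this]
    have h2 : (u - 2 * s * b) * (u + 2 * s * b) = 0 := by nlinarith [h1]
    rcases mul_eq_zero.mp h2 with h | h
    · linarith
    · nlinarith
  rw [Real.cosh_eq, Real.exp_neg, ← hsdef, husb, ← hab]
  have : s ^ 2 * b = a := by rw [hs2]; field_simp
  field_simp
  nlinarith [this]

set_option maxHeartbeats 1000000 in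
theorem stmt_18 (p ε : ℝ) (hp0 : 0 < p) (hp1 : p < 1) (hp2 : p ≠ 1 / 2)
    (hε0 : 0 < ε) (hε1 : ε < 1) (hε2 : ε ≠ 1 / 2)
    (J K lam : ℝ)
    (hJ : J = (1 / 2) * Real.log ((1 - p) / p))
    (hK : K = (1 / 2) * Real.log ((1 - ε) / ε))
    (hlam : lam = 4 * Real.cosh J * Real.cosh K)
    (A B : ℝ → ℝ)
    (hA : ∀ u, A u = (1 / 2) * Real.log (Real.cosh (u + J) / Real.cosh (u - J)))
    (hB : ∀ u, B u = (1 / 2) * Real.log (4 * Real.cosh (u + J) * Real.cosh (u - J)))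
    (y : ℕ → ℝ) (hy : ∀ i, y i = 1 ∨ y i = -1)
    (W : ℕ → ℕ → ℝ)
    (hW0 : ∀ n i : ℕ, n < i → W n i = 0)
    (hWrec : ∀ n i : ℕ, i ≤ n → W n i = K * y i + A (W n (i + 1)))
    (wlim : ℕ → ℝ)
    (hwlim : ∀ i : ℕ, Filter.Tendsto (fun n => W n i) Filter.atTop (nhds (wlim i)))
    (g : ℝ)
    (hg : g = (1 / lam) * Real.cosh (wlim 0) * Real.exp (B (wlim 1))
                / Real.cosh (wlim 1))
    (z q b : ℕ → ℝ)
    (hz : ∀ i : ℕ, 1 ≤ i → z i = (1 - 2 * p) * (1 - 2 * ε) * y (i - 1) * Real.tanh (wlim i))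
    (hq : ∀ i : ℕ, 1 ≤ i → q i = (1 - 2 * p) * y (i - 1) * y i)
    (hb : ∀ i : ℕ, 1 ≤ i → b i = 4 * ε * (1 - ε) * q i) :
    (∀ i : ℕ, 1 ≤ i → |z (i + 1)| < 1 ∧ z i = q i - b i / (1 + z (i + 1))) ∧
    2 * g = 1 + z 1 := by
  
  -- basic facts about tanh J, tanh K
  have hp' : p ≠ 0 := hp0.ne'
  have hε' : ε ≠ 0 := hε0.ne'
  have htJ : Real.tanh J = 1 - 2 * p := by
    rw [hJ, my_tanh_half_log (div_pos (by linarith) hp0)]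
    rw [div_eq_iff]
    · field_simp
      ring
    · have : (1 - p) / p + 1 = 1 / p := by field_simp; ring
      rw [this]
      positivity
  have htK : Real.tanh K = 1 - 2 * ε := by
    rw [hK, my_tanh_half_log (div_pos (by linarith) hε0)]
    rw [div_eq_iff]
    · field_simp
      ring
    · have : (1 - ε) / ε + 1 = 1 / ε := by field_simp; ring
      rw [this]
      positivity
  -- continuity of A
  have hAc : ∀ c : ℝ, ContinuousAt A c := by
    intro c
    have hfun : A = fun u => (1/2) * Real.log (Real.cosh (u + J) / Real.cosh (u - J)) :=
      funext hA
    rw [hfun]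
    have h1 : ContinuousAt (fun u : ℝ => Real.cosh (u + J) / Real.cosh (u - J)) c :=
      ((Real.continuous_cosh.comp (continuous_id.add continuous_const)).div
        (Real.continuous_cosh.comp (continuous_id.sub continuous_const))
        (fun x => (Real.cosh_pos _).ne')).continuousAt
    exact continuousAt_const.mul
      (h1.log (div_pos (Real.cosh_pos _) (Real.cosh_pos _)).ne')
  -- recursion for the limit
  have hrec : ∀ i : ℕ, wlim i = K * y i + A (wlim (i + 1)) := by
    intro i
    have h2 : Filter.Tendsto (fun n => K * y i + A (W n (i + 1))) Filter.atTop
        (nhds (K * y i + A (wlim (i + 1)))) :=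
      Filter.Tendsto.const_add _ (((hAc (wlim (i+1))).tendsto).comp (hwlim (i+1)))
    have h3 : (fun n => K * y i + A (W n (i + 1))) =ᶠ[Filter.atTop] (fun n => W n i) :=
      Filter.eventually_atTop.mpr ⟨i, fun n hn => (hWrec n i hn).symm⟩
    exact tendsto_nhds_unique (hwlim i) (h2.congr' h3)
  -- |z j| < 1 for j ≥ 1
  have hzabs : ∀ j : ℕ, 1 ≤ j → |z j| < 1 := by
    intro j hj
    rw [hz j hj, abs_mul, abs_mul, abs_mul]
    have h1 : |1 - 2*p| < 1 := by rw [abs_lt]; constructor <;> linarith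
    have h2 : |1 - 2*ε| < 1 := by rw [abs_lt]; constructor <;> linarith
    have h3 : |y (j-1)| = 1 := by rcases hy (j-1) with h|h <;> simp [h]
    have h4 := my_abs_tanh_lt_one (wlim j)
    rw [h3]
    have n1 := abs_nonneg (1 - 2*p)
    have n2 := abs_nonneg (1 - 2*ε)
    have n3 := abs_nonneg (Real.tanh (wlim j))
    nlinarith [mul_nonneg n1 n2, mul_nonneg (mul_nonneg n1 n2) n3]
  -- tanh recursion
  have htA : ∀ u : ℝ, Real.tanh (A u) = Real.tanh u * Real.tanh J := by
    intro u
    rw [hA]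
    exact my_tanh_A J u
  have htw : ∀ i : ℕ, Real.tanh (wlim i) =
      (y i * (1 - 2*ε) + (1 - 2*p) * Real.tanh (wlim (i+1))) /
      (1 + y i * (1 - 2*ε) * ((1 - 2*p) * Real.tanh (wlim (i+1)))) := by
    intro i
    rw [hrec i, my_tanh_add]
    have h1 : Real.tanh (K * y i) = y i * Real.tanh K := by
      rcases hy i with h|h <;> simp [h, Real.tanh_neg]
    rw [h1, htA, htJ, htK]
    ring_nf
  constructor
  · intro i hi
    have habs := hzabs (i+1) (by omega)
    refine ⟨habs, ?_⟩
    have hDpos : 0 < 1 + z (i+1) := by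
      have := abs_lt.mp habs
      linarith [this.1]
    have hzi1 : z (i+1) = (1 - 2*p) * (1 - 2*ε) * y i * Real.tanh (wlim (i+1)) := by
      have h := hz (i+1) (by omega)
      simpa using h
    have hD : 1 + y i * (1 - 2*ε) * ((1 - 2*p) * Real.tanh (wlim (i+1))) = 1 + z (i+1) := by
      rw [hzi1]; ring
    have hzi : z i = (1 - 2*p) * (1 - 2*ε) * y (i-1) *
        ((y i * (1 - 2*ε) + (1 - 2*p) * Real.tanh (wlim (i+1))) / (1 + z (i+1))) := by
      rw [hz i hi, htw i, hD]
    rw [hzi, hq i hi, hb i hi, hq i hi]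
    field_simp [hDpos.ne']
    rw [hzi1]
    rcases hy i with h|h <;> rw [h] <;> ring
  · -- 2 g = 1 + z 1
    have hz1 : z 1 = (1 - 2*p) * (1 - 2*ε) * y 0 * Real.tanh (wlim 1) := by
      simpa using hz 1 le_rfl
    have h0 := hrec 0
    have hcA := (Real.cosh_pos (A (wlim 1))).ne'
    have hcosh0 : Real.cosh (wlim 0) = Real.cosh K * Real.cosh (A (wlim 1)) * (1 + z 1) := by
      rw [h0, Real.cosh_add]
      have hcK : Real.cosh (K * y 0) = Real.cosh K := by
        rcases hy 0 with h|h <;> simp [h, Real.cosh_neg]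
      have hsK : Real.sinh (K * y 0) = y 0 * Real.sinh K := by
        rcases hy 0 with h|h <;> simp [h, Real.sinh_neg]
      have hsA : Real.sinh (A (wlim 1)) =
          Real.tanh (wlim 1) * Real.tanh J * Real.cosh (A (wlim 1)) := by
        rw [← htA (wlim 1), Real.tanh_eq_sinh_div_cosh]
        field_simp
      have hsKt : Real.sinh K = Real.tanh K * Real.cosh K := by
        rw [Real.tanh_eq_sinh_div_cosh]
        field_simp
      rw [hcK, hsK, hsA, hsKt, htJ, htK, hz1]
      ring
    have hAB : Real.cosh (A (wlim 1)) * Real.exp (B (wlim 1))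
        = 2 * Real.cosh J * Real.cosh (wlim 1) := by
      rw [hA, hB]
      exact my_coshA_expB J (wlim 1)
    have hexp : Real.exp (B (wlim 1))
        = 2 * Real.cosh J * Real.cosh (wlim 1) / Real.cosh (A (wlim 1)) := by
      rw [eq_div_iff hcA]
      linear_combination hAB
    have hcJ := (Real.cosh_pos J).ne'
    have hcK' := (Real.cosh_pos K).ne'
    have hc1 := (Real.cosh_pos (wlim 1)).ne'
    rw [hg, hlam, hcosh0, hexp]
    field_simp
    ring
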